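/- (Stein identity) Let q be a C¹ strictly positive probability density on ℝ^d vanishing at infinity together with l(y,·)q(y), and l a C¹ bounded kernel with bounded derivatives. Then E_{y~q}[ l(y,·) ∇_y log q(y) + ∇_y l(y,·) ] = 0 in the product RKHS F_l^d. -/

import Mathlib

open MeasureTheory

open scoped RealInnerProductSpace

/-- Stein identity: For a C¹ strictly positive probability density
`q` on `ℝ^d` such that `l(y,·) q(y)` vanishes at infinity, and a C¹ bounded
kernel `l` with bounded derivatives, the kernelized Stein feature has zero mean:
`E_{y∼q}[ l(y,·) ∇log q(y) + ∇_y l(y,·) ] = 0` (in `F_l^d`, i.e. tested at every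
point `y'`). -/
theorem stmt_12 {d : ℕ}
    (q : EuclideanSpace ℝ (Fin d) → ℝ)
    (hq_pos : ∀ x, 0 < q x) (hq_diff : ContDiff ℝ 1 q)
    (hq_norm : ∫ x, q x = 1)
    (sq : EuclideanSpace ℝ (Fin d) → EuclideanSpace ℝ (Fin d))
    (hsq : ∀ x, HasGradientAt (fun y => Real.log (q y)) (sq x) x)
    (l : EuclideanSpace ℝ (Fin d) → EuclideanSpace ℝ (Fin d) → ℝ)
    (hl_smooth : ContDiff ℝ 1
      (fun p : EuclideanSpace ℝ (Fin d) × EuclideanSpace ℝ (Fin d) => l p.1 p.2))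
    (hl_symm : ∀ y y', l y y' = l y' y)
    (hl_pd : ∀ (n : ℕ) (y : Fin n → EuclideanSpace ℝ (Fin d)) (c : Fin n → ℝ),
      0 ≤ ∑ i, ∑ j, c i * c j * l (y i) (y j))
    (hl_bdd : ∃ C, ∀ y y', |l y y'| ≤ C)
    (hl_grad_bdd : ∃ C, ∀ y y', ‖gradient (fun u => l u y') y‖ ≤ C)
    (hvanish : ∀ y', Filter.Tendsto (fun y => l y y' * q y) (Filter.cocompact _) (nhds 0))
    (hint : ∀ y', Integrable
      (fun y => l y y' • sq y + gradient (fun u => l u y') y)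
      (volume.withDensity fun x => ENNReal.ofReal (q x))) :
    ∀ y', (∫ y, (l y y' • sq y + gradient (fun u => l u y') y)
      ∂(volume.withDensity fun x => ENNReal.ofReal (q x))) = 0 := by
  intro y'
  have hint' := hint y'
  have hq_cont : Continuous q := hq_diff.continuous
  have hq_int : Integrable q := by
    by_contra h
    rw [MeasureTheory.integral_undef h] at hq_norm
    norm_num at hq_norm
  set μ := volume.withDensity fun x => ENNReal.ofReal (q x) with hμdef
  set L : EuclideanSpace ℝ (Fin d) → ℝ := fun u => l u y' with hLdef
  have hL_diff : ContDiff ℝ 1 L :=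
    hl_smooth.comp (contDiff_id.prodMk contDiff_const)
  set G : EuclideanSpace ℝ (Fin d) → ℝ := fun u => L u * q u with hGdef
  have hG_diff : ContDiff ℝ 1 G := hL_diff.mul hq_diff
  set v : EuclideanSpace ℝ (Fin d) → EuclideanSpace ℝ (Fin d) :=
    fun y => l y y' • sq y + gradient L y with hvdef
  -- the density as an `ℝ≥0`-valued function
  set qn : EuclideanSpace ℝ (Fin d) → NNReal := fun x => Real.toNNReal (q x) with hqndef
  have hqn_meas : Measurable qn := measurable_real_toNNReal.comp hq_cont.measurable
  have hμ : μ = volume.withDensity fun x => ((qn x : NNReal) : ENNReal) := rfl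
  -- pointwise identity: q y • ⟪w, v y⟫ = (∂_w G) y
  have hpt : ∀ (w : EuclideanSpace ℝ (Fin d)) (y : EuclideanSpace ℝ (Fin d)),
      q y • ⟪w, v y⟫ = fderiv ℝ G y w := by
    intro w y
    have hq0 : q y ≠ 0 := (hq_pos y).ne'
    have hqd : DifferentiableAt ℝ q y := hq_diff.differentiable one_ne_zero y
    have hLd : DifferentiableAt ℝ L y := hL_diff.differentiable one_ne_zero y
    have hlog : HasFDerivAt (fun z => Real.log (q z)) ((q y)⁻¹ • fderiv ℝ q y) y := by
      exact
        (Real.hasDerivAt_log hq0).comp_hasFDerivAt y hqd.hasFDerivAt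
    have hsq' : HasFDerivAt (fun z => Real.log (q z))
        (InnerProductSpace.toDual ℝ _ (sq y)) y :=
      hasGradientAt_iff_hasFDerivAt.mp (hsq y)
    have huniq := hsq'.unique hlog
    have h1 : ⟪sq y, w⟫ = (q y)⁻¹ * fderiv ℝ q y w := by
      have := DFunLike.congr_fun huniq w
      simpa [InnerProductSpace.toDual_apply_apply] using this
    have hgradL : HasFDerivAt L (InnerProductSpace.toDual ℝ _ (gradient L y)) y :=
      hasGradientAt_iff_hasFDerivAt.mp hLd.hasGradientAt
    have h2 : fderiv ℝ L y = InnerProductSpace.toDual ℝ _ (gradient L y) := hgradL.fderiv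
    have h3 : fderiv ℝ G y w = L y * fderiv ℝ q y w + q y * fderiv ℝ L y w := by
      have := fderiv_mul hLd hqd
      rw [hGdef]
      rw [show (fun u => L u * q u) = L * q from rfl, this]
      simp [smul_eq_mul]
    have h5 : fderiv ℝ L y w = ⟪gradient L y, w⟫ := by
      rw [h2]; exact InnerProductSpace.toDual_apply_apply
    have h4 : ⟪w, v y⟫ = l y y' * ⟪sq y, w⟫ + fderiv ℝ L y w := by
      rw [hvdef, h5]
      simp only [inner_add_right, real_inner_smul_right]
      rw [real_inner_comm w (sq y), real_inner_comm w (gradient L y)]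
    rw [h4, h1, h3]
    have hLy : L y = l y y' := rfl
    rw [← hLy]
    simp only [smul_eq_mul]
    field_simp
  -- the key scalar statement
  have key : ∀ w : EuclideanSpace ℝ (Fin d), ∫ y, ⟪w, v y⟫ ∂μ = 0 := by
    intro w
    have hwin : Integrable (fun y => ⟪w, v y⟫) μ := by
      simpa using (innerSL ℝ w).integrable_comp hint'
    have hwin' : Integrable (fun y => qn y • ⟪w, v y⟫) volume := by
      rw [hμ] at hwin
      exact (integrable_withDensity_iff_integrable_smul hqn_meas).mp hwin
    have hsceq : (fun y => qn y • ⟪w, v y⟫) = fun y => fderiv ℝ G y w := by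
      funext y
      rw [NNReal.smul_def, hqndef]
      rw [show ((Real.toNNReal (q y) : ℝ)) = q y from Real.coe_toNNReal _ (hq_pos y).le]
      exact hpt w y
    have hscint : Integrable (fun y => fderiv ℝ G y w) volume := by
      rw [← hsceq]; exact hwin'
    have hG_int : Integrable G := by
      obtain ⟨C, hC⟩ := hl_bdd
      refine hq_int.bdd_mul (c := C) (hL_diff.continuous.aestronglyMeasurable) ?_
      exact Filter.Eventually.of_forall fun y => by simpa [hLdef, Real.norm_eq_abs] using hC y y'
    have hconst0 : (fun x : EuclideanSpace ℝ (Fin d) =>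
        G x * fderiv ℝ (fun _ => (1:ℝ)) x w) = fun _ => 0 := by
      funext x
      simp
    have hibp := integral_mul_fderiv_eq_neg_fderiv_mul_of_integrable
      (f := G) (g := fun _ => (1:ℝ)) (v := w) (μ := (volume : Measure (EuclideanSpace ℝ (Fin d))))
      (by simpa using hscint)
      (by rw [hconst0]; exact integrable_zero _ _ _)
      (by simpa using hG_int)
      (fun x _ => hG_diff.differentiable one_ne_zero x) (fun x _ => differentiableAt_const (1:ℝ))
    rw [hconst0] at hibp
    simp only [mul_one, integral_zero] at hibp
    have hzero : ∫ y, fderiv ℝ G y w = 0 := by linarith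
    rw [hμ, integral_withDensity_eq_integral_smul hqn_meas]
    calc ∫ y, qn y • ⟪w, v y⟫ = ∫ y, fderiv ℝ G y w := by rw [hsceq]
      _ = 0 := hzero
  -- conclude by testing against the integral itself
  have hVV : ⟪∫ y, v y ∂μ, ∫ y, v y ∂μ⟫ = (0:ℝ) := by
    rw [← integral_inner hint' (∫ y, v y ∂μ)]
    exact key _
  exact inner_self_eq_zero.mp hVV
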